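/- Let Z = [0,1] × [0,∞) and define the semiflow S(t;(x₀,y₀)) = (x₀, max(y₀ − x₀t, 0)) for x₀ > 0 and S(t;(0,y₀)) = (0, max(y₀ − t, 0)). Then S is a strict semiflow that is point-dissipative and asymptotically compact but not dissipative: for every M > 0, the set [0,1]×[0,M] does not absorb the bounded set [0,1]×{2M}, since for x₀ = 1/n and t_n = Mn/2 the point S(t_n;(1/n,2M)) has second coordinate 3M/2 > M, with t_n → ∞. -/

import Mathlib

open Filter Metric Set Topology Bornology

/-- The phase space `Z = [0,1] × [0,∞)`. -/
def Zset : Set (ℝ × ℝ) := Icc (0 : ℝ) 1 ×ˢ Ici (0 : ℝ)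

/-- The semiflow: the first coordinate is constant; the second decreases with
speed `x₀` when `x₀ > 0` and speed `1` when `x₀ = 0`, stopped at `0`. -/
noncomputable def Sflow (t : ℝ) (p : ℝ × ℝ) : ℝ × ℝ :=
  (p.1, max (p.2 - (if p.1 = 0 then 1 else p.1) * t) 0)

lemma speed_nonneg (p : ℝ × ℝ) (hp : p ∈ Zset) :
    0 ≤ (if p.1 = 0 then 1 else p.1) := by
  split_ifs with h
  · norm_num
  · exact hp.1.1

lemma speed_pos (p : ℝ × ℝ) (hp : p ∈ Zset) :
    0 < (if p.1 = 0 then 1 else p.1) := by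
  split_ifs with h
  · norm_num
  · exact lt_of_le_of_ne hp.1.1 (Ne.symm h)

theorem Sflow_point_dissipative_not_dissipative :
    -- `Sflow` is a strict semiflow on `Z`
    (∀ p ∈ Zset, Sflow 0 p = p) ∧
    (∀ t τ : ℝ, 0 ≤ t → 0 ≤ τ → ∀ p ∈ Zset, Sflow (t + τ) p = Sflow t (Sflow τ p)) ∧
    (∀ t : ℝ, 0 ≤ t → ∀ p ∈ Zset, Sflow t p ∈ Zset) ∧
    -- point-dissipative
    (∃ B₀ : Set (ℝ × ℝ), IsBounded B₀ ∧ B₀ ⊆ Zset ∧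
      ∀ p ∈ Zset, ∃ T : ℝ, ∀ t ≥ T, Sflow t p ∈ B₀) ∧
    -- asymptotically compact
    (∀ B ⊆ Zset, IsBounded B → ∀ (tn : ℕ → ℝ) (zn : ℕ → ℝ × ℝ),
      Tendsto tn atTop atTop → (∀ n, zn n ∈ B) →
      ∃ (w : ℝ × ℝ) (φ : ℕ → ℕ), StrictMono φ ∧
        Tendsto (fun n => Sflow (tn (φ n)) (zn (φ n))) atTop (𝓝 w)) ∧
    -- not dissipative: `[0,1] × [0,M]` does not absorb `[0,1] × {2M}`
    (∀ M : ℝ, 0 < M →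
      (¬ ∃ T : ℝ, ∀ t ≥ T, ∀ p ∈ Icc (0 : ℝ) 1 ×ˢ ({2 * M} : Set ℝ),
        Sflow t p ∈ Icc (0 : ℝ) 1 ×ˢ Icc (0 : ℝ) M) ∧
      ∀ n : ℕ, 1 ≤ n →
        (Sflow (M * n / 2) ((1 : ℝ) / n, 2 * M)).2 = 3 * M / 2 ∧ M < 3 * M / 2) := by
  refine ⟨?_, ?_, ?_, ?_, ?_, ?_⟩
  · -- S 0 p = p
    intro p hp
    have h2 : (0:ℝ) ≤ p.2 := hp.2
    simp [Sflow, max_eq_left h2]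
  · -- semigroup
    intro t τ ht hτ p hp
    have hc : 0 ≤ (if p.1 = 0 then 1 else p.1) := speed_nonneg p hp
    simp only [Sflow]
    refine Prod.ext rfl ?_
    simp only
    set c := if p.1 = 0 then 1 else p.1 with hcdef
    have hct : 0 ≤ c * t := mul_nonneg hc ht
    rcases le_or_gt (p.2 - c * τ) 0 with h | h
    · rw [max_eq_right h, max_eq_right (by linarith), max_eq_right (by by_cases h0 : p.1 = 0 <;> simp [h0, ht] <;> nlinarith [hp.1.1, ht])]
    · rw [max_eq_left h.le]
      congr 1
      rw [hcdef]; by_cases h0 : p.1 = 0 <;> simp [h0] <;> ring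
  · -- invariance
    intro t ht p hp
    exact ⟨hp.1, mem_Ici.mpr (le_max_right _ _)⟩
  · -- point-dissipative
    refine ⟨Icc (0:ℝ) 1 ×ˢ ({0} : Set ℝ), (isBounded_Icc 0 1).prod isBounded_singleton,
      prod_mono subset_rfl (by simp), ?_⟩
    intro p hp
    have hc : 0 < (if p.1 = 0 then 1 else p.1) := speed_pos p hp
    refine ⟨p.2 / (if p.1 = 0 then 1 else p.1), fun t ht => ?_⟩
    have : p.2 - (if p.1 = 0 then 1 else p.1) * t ≤ 0 := by
      have := (div_le_iff₀' hc).mp ht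
      linarith
    exact ⟨hp.1, mem_singleton_iff.mpr (max_eq_right this)⟩
  · -- asymptotically compact
    intro B hB hBb tn zn htn hzn
    obtain ⟨R, hR⟩ := isBounded_iff_forall_norm_le.mp hBb
    obtain ⟨N, hN⟩ := (htn.eventually_ge_atTop 0).exists_forall_of_atTop
    set R' := max R 0 with hR'
    have hK : IsCompact (Icc (0:ℝ) 1 ×ˢ Icc (0:ℝ) R') := isCompact_Icc.prod isCompact_Icc
    have hmem : ∀ n, Sflow (tn (n + N)) (zn (n + N)) ∈ Icc (0:ℝ) 1 ×ˢ Icc (0:ℝ) R' := by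
      intro n
      have hz := hB (hzn (n + N))
      refine ⟨hz.1, le_max_right _ _, ?_⟩
      have hc : 0 ≤ (if (zn (n + N)).1 = 0 then 1 else (zn (n + N)).1) := speed_nonneg _ hz
      have ht0 : 0 ≤ tn (n + N) := hN (n + N) (Nat.le_add_left N n)
      have h2 : (zn (n + N)).2 ≤ R' := by
        have := hR _ (hzn (n + N))
        have h' : ‖(zn (n + N)).2‖ ≤ ‖zn (n + N)‖ := norm_snd_le _
        have : |(zn (n + N)).2| ≤ R := by simpa [Real.norm_eq_abs] using h'.trans this
        exact (le_abs_self _).trans (this.trans (le_max_left _ _))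
      refine max_le ?_ (le_max_right R 0)
      nlinarith [mul_nonneg hc ht0]
    obtain ⟨w, -, φ, hφ, hconv⟩ := hK.tendsto_subseq hmem
    exact ⟨w, fun n => φ n + N, hφ.add_const N, hconv⟩
  · -- not dissipative
    intro M hM
    constructor
    · rintro ⟨T, hT⟩
      set t := max T 0 with htdef
      obtain ⟨n, hn⟩ := exists_nat_gt (t / M)
      have ht0 : 0 ≤ t := le_max_right T 0
      have hn0 : 0 < (n : ℝ) := lt_of_le_of_lt (div_nonneg ht0 hM.le) hn
      have hn1 : (1:ℝ) ≤ n := by exact_mod_cast Nat.cast_pos.mp hn0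
      have hmem : ((1:ℝ)/n, 2*M) ∈ Icc (0:ℝ) 1 ×ˢ ({2*M} : Set ℝ) := by
        refine ⟨⟨by positivity, ?_⟩, rfl⟩
        rw [div_le_one hn0]; exact hn1
      have h := (hT t (le_max_left T 0) _ hmem).2.2
      have hne : (1:ℝ)/n ≠ 0 := by positivity
      simp only [Sflow, if_neg hne] at h
      have htn : t < M * n := by rw [mul_comm]; exact (div_lt_iff₀ hM).mp hn
      have h1 : (1:ℝ)/n * t < M := by
        rw [div_mul_eq_mul_div, one_mul, div_lt_iff₀ hn0]
        linarith [htn, mul_comm M (n:ℝ)]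
      have : M < max (2*M - 1/n * t) 0 := lt_of_lt_of_le (by linarith) (le_max_left _ _)
      linarith
    · intro n hn
      have hn0 : 0 < (n : ℝ) := by exact_mod_cast Nat.pos_of_ne_zero (by omega)
      have hne : (1:ℝ)/n ≠ 0 := by positivity
      refine ⟨?_, by linarith⟩
      simp only [Sflow, if_neg hne]
      have : 2*M - (1:ℝ)/n * (M * n / 2) = 3*M/2 := by
        field_simp
        ring
      rw [this, max_eq_left (by linarith)]
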